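/- Let Φ : ℂ^N → ℂ^M be a map, let x ∈ ℂ^N be s-sparse, let ε ∈ ℂ^M, and set y = Φ(x) + ε. For each n ≥ 0 let Φ_{x_n} be an M×N matrix with unit ℓ²-norm columns and μ(Φ_{x_n}) ≤ μ₀, and define the iterates x_{n+1} = H_s( x_n + Φ_{x_n}^* ( y − Φ_{x_n} x_n ) ). Suppose ρ = μ₀(3s+1) < 1 and there exists a constant M' such that ‖Φ_{x_n}^* e_n‖_∞ ≤ M' for all n, where e_n = Φ(x) − Φ_{x_n} x + ε. Then for all n ≥ 1, ‖x_n − x‖₁ ≤ ρⁿ ‖x₀ − x‖₁ + M'(3s+1)/(1−ρ). -/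

import Mathlib

open Matrix Finset Filter

noncomputable section

/-- A vector is `s`-sparse if it has at most `s` nonzero entries. -/
def sparse {n : Type*} (s : ℕ) (x : n → ℂ) : Prop := {i | x i ≠ 0}.ncard ≤ s

/-- The ℓ² norm of the `j`-th column of a matrix. -/
def colNorm {m n : Type*} [Fintype m] (A : Matrix m n ℂ) (j : n) : ℝ :=
  Real.sqrt (∑ i, ‖A i j‖ ^ 2)

/-- The mutual coherence of a matrix:
`μ(A) = max_{j ≠ k} |⟨A_j, A_k⟩| / (‖A_j‖₂ ‖A_k‖₂)`. -/
def coherence {m n : Type*} [Fintype m] [Fintype n] (A : Matrix m n ℂ) : ℝ :=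
  sSup {r : ℝ | ∃ j k, j ≠ k ∧ r = ‖(Aᴴ * A) j k‖ / (colNorm A j * colNorm A k)}

/-- The ℓ¹ norm of a vector. -/
def l1 {n : Type*} [Fintype n] (x : n → ℂ) : ℝ := ∑ i, ‖x i‖

/-- The ℓ^∞ norm of a vector. -/
def linf {n : Type*} [Fintype n] (x : n → ℂ) : ℝ := ⨆ i, ‖x i‖

/-- The squared ℓ² norm of a vector. -/
def l2sq {n : Type*} [Fintype n] (x : n → ℂ) : ℝ := ∑ i, ‖x i‖ ^ 2

/-- The entrywise max norm of a matrix, `‖M‖_max = max_{i,j} |M_{ij}|`. -/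
def maxNorm {m n : Type*} [Fintype m] [Fintype n] (A : Matrix m n ℂ) : ℝ :=
  ⨆ p : m × n, ‖A p.1 p.2‖

/-- The induced ℓ¹ matrix norm (maximum absolute column sum). -/
def matL1 {m n : Type*} [Fintype m] [Fintype n] (A : Matrix m n ℂ) : ℝ :=
  ⨆ j, ∑ i, ‖A i j‖

/-- `x` is a hard thresholding `H_s(z)` of `z`: it agrees with `z` on an
index set `I` of size `s` consisting of entries of largest modulus, and
vanishes outside `I`. -/
def IsHardThreshold {n : Type*} [Fintype n] (s : ℕ) (z x : n → ℂ) : Prop :=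
  ∃ I : Finset n, I.card = s ∧ (∀ i ∈ I, ∀ j ∉ I, ‖z j‖ ≤ ‖z i‖) ∧
    (∀ i ∈ I, x i = z i) ∧ (∀ i ∉ I, x i = 0)

/-- `A` satisfies the restricted isometry property of order `t` with constant `δ`. -/
def SatisfiesRIP {m n : Type*} [Fintype m] [Fintype n] (A : Matrix m n ℂ) (t : ℕ) (δ : ℝ) :
    Prop :=
  0 < δ ∧ δ < 1 ∧ ∀ z : n → ℂ, sparse t z →
    (1 - δ) * l2sq z ≤ l2sq (A.mulVec z) ∧ l2sq (A.mulVec z) ≤ (1 + δ) * l2sq z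

/-- The spectral (operator ℓ²) norm of a square matrix. -/
def specNorm {n : Type*} [Fintype n] [DecidableEq n] (M : Matrix n n ℂ) : ℝ :=
  ‖Matrix.toEuclideanCLM (𝕜 := ℂ) M‖


-- auxiliary lemmas

lemma my_coherence_nonneg {m n : Type*} [Fintype m] [Fintype n] (A : Matrix m n ℂ) :
    0 ≤ coherence A := by
  apply Real.sSup_nonneg
  rintro r ⟨j, k, -, rfl⟩
  apply div_nonneg (norm_nonneg _)
  exact mul_nonneg (Real.sqrt_nonneg _) (Real.sqrt_nonneg _)

lemma my_coherence_entry_le {m n : Type*} [Fintype m] [Fintype n]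
    (A : Matrix m n ℂ) (hcol : ∀ j, colNorm A j = 1) {μ0 : ℝ}
    (hμ : coherence A ≤ μ0) {j k : n} (hjk : j ≠ k) :
    ‖(Aᴴ * A) j k‖ ≤ μ0 := by
  have hmem : ‖(Aᴴ * A) j k‖ ∈
      {r : ℝ | ∃ j k, j ≠ k ∧ r = ‖(Aᴴ * A) j k‖ / (colNorm A j * colNorm A k)} :=
    ⟨j, k, hjk, by rw [hcol, hcol]; norm_num⟩
  have hsub : {r : ℝ | ∃ j k, j ≠ k ∧ r = ‖(Aᴴ * A) j k‖ / (colNorm A j * colNorm A k)} ⊆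
      Set.range (fun p : n × n => ‖(Aᴴ * A) p.1 p.2‖ / (colNorm A p.1 * colNorm A p.2)) := by
    rintro r ⟨a, b, -, rfl⟩; exact ⟨(a, b), rfl⟩
  exact le_trans (le_csSup ((Set.finite_range _).subset hsub).bddAbove hmem) hμ

lemma my_linf_ge {n : Type*} [Fintype n] (v : n → ℂ) (i : n) : ‖v i‖ ≤ linf v := by
  rw [linf]
  exact le_ciSup (Set.finite_range fun i => ‖v i‖).bddAbove i

lemma my_gram_diag {m n : Type*} [Fintype m] [Fintype n]
    (A : Matrix m n ℂ) (hcol : ∀ j, colNorm A j = 1) (i : n) :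
    (Aᴴ * A) i i = 1 := by
  have h1 : ∑ k, ‖A k i‖ ^ 2 = 1 := by
    have := hcol i
    rw [colNorm, Real.sqrt_eq_one] at this
    exact this
  have : (Aᴴ * A) i i = ((∑ k, ‖A k i‖ ^ 2 : ℝ) : ℂ) := by
    rw [Matrix.mul_apply]
    push_cast
    refine Finset.sum_congr rfl fun k _ => ?_
    rw [Matrix.conjTranspose_apply]
    rw [Complex.star_def, Complex.conj_mul']
  rw [this, h1, Complex.ofReal_one]

lemma my_geom_le (r : ℝ) (h0 : 0 ≤ r) (h1 : r < 1) (n : ℕ) :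
    ∑ i ∈ Finset.range n, r ^ i ≤ 1 / (1 - r) := by
  rw [geom_sum_eq h1.ne]
  have h : 0 < 1 - r := by linarith
  have heq : (r ^ n - 1) / (r - 1) = (1 - r ^ n) / (1 - r) := by
    rw [← neg_div_neg_eq]; ring_nf
  rw [heq]
  have hrn : 0 ≤ r ^ n := by positivity
  gcongr
  linarith


lemma my_threshold_l1_le {N s : ℕ} {z xnew x : Fin N → ℂ}
    (hx : sparse s x) (ht : IsHardThreshold s z xnew) {B : ℝ}
    (hB : ∀ i, ‖z i - x i‖ ≤ B) (hB0 : 0 ≤ B) :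
    l1 (xnew - x) ≤ 3 * s * B := by
  classical
  obtain ⟨I, hIcard, hthr, heq, hzero⟩ := ht
  set S : Finset (Fin N) := Finset.univ.filter (fun i => x i ≠ 0) with hS
  have hScard : S.card ≤ s := by
    have : {i | x i ≠ 0} = (S : Set (Fin N)) := by
      ext i; simp [hS]
    rw [sparse, this, Set.ncard_coe_finset] at hx
    exact hx
  have hsplit : l1 (xnew - x) = ∑ i ∈ I, ‖xnew i - x i‖ + ∑ i ∈ Iᶜ, ‖xnew i - x i‖ := by
    rw [l1, ← Finset.sum_add_sum_compl I]
    rfl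
  have h1 : ∑ i ∈ I, ‖xnew i - x i‖ ≤ s * B := by
    calc ∑ i ∈ I, ‖xnew i - x i‖ ≤ ∑ _i ∈ I, B := by
          apply Finset.sum_le_sum
          intro i hi
          rw [heq i hi]
          exact hB i
      _ = s * B := by rw [Finset.sum_const, hIcard, nsmul_eq_mul]
  have h2 : ∑ i ∈ Iᶜ, ‖xnew i - x i‖ ≤ 2 * s * B := by
    set T : Finset (Fin N) := Iᶜ.filter (fun i => x i ≠ 0) with hT
    have hTsub : T ⊆ S := by
      intro i hi
      simp only [hT, hS, Finset.mem_filter] at *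
      exact ⟨Finset.mem_univ i, hi.2⟩
    have hstep : ∑ i ∈ Iᶜ, ‖xnew i - x i‖ = ∑ i ∈ T, ‖x i‖ := by
      rw [Finset.sum_filter]
      apply Finset.sum_congr rfl
      intro i hi
      rw [hzero i (by simpa using hi), zero_sub, norm_neg]
      by_cases h : x i = 0 <;> simp [h]
    rw [hstep]
    rcases Finset.eq_empty_or_nonempty T with hTe | hTne
    · rw [hTe, Finset.sum_empty]; positivity
    · -- find j ∈ I with x j = 0
      have hIS : ¬ I ⊆ S := by
        intro hsub
        obtain ⟨i0, hi0⟩ := hTne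
        have hi0S : i0 ∈ S := hTsub hi0
        have hi0I : i0 ∉ I := by
          simp only [hT, Finset.mem_filter, Finset.mem_compl] at hi0
          exact hi0.1
        have : I.card + 1 ≤ S.card := by
          have : insert i0 I ⊆ S := Finset.insert_subset hi0S hsub
          calc I.card + 1 = (insert i0 I).card := (Finset.card_insert_of_notMem hi0I).symm
            _ ≤ S.card := Finset.card_le_card this
        omega
      obtain ⟨j, hjI, hjS⟩ := Finset.not_subset.mp hIS
      have hxj : x j = 0 := by
        simp only [hS, Finset.mem_filter, Finset.mem_univ, true_and, not_not] at hjS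
        exact hjS
      have hzj : ‖z j‖ ≤ B := by
        have := hB j
        rwa [hxj, sub_zero] at this
      calc ∑ i ∈ T, ‖x i‖ ≤ ∑ _i ∈ T, (2 * B) := by
            apply Finset.sum_le_sum
            intro i hi
            have hiI : i ∉ I := by
              simp only [hT, Finset.mem_filter, Finset.mem_compl] at hi
              exact hi.1
            have h1 : ‖z i‖ ≤ ‖z j‖ := hthr j hjI i hiI
            have h2 : ‖x i‖ ≤ ‖x i - z i‖ + ‖z i‖ := by
              calc ‖x i‖ = ‖(x i - z i) + z i‖ := by ring_nf
                _ ≤ ‖x i - z i‖ + ‖z i‖ := norm_add_le _ _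
            have h3 : ‖x i - z i‖ = ‖z i - x i‖ := norm_sub_rev _ _
            have := hB i
            linarith
        _ = T.card * (2 * B) := by rw [Finset.sum_const, nsmul_eq_mul]
        _ ≤ s * (2 * B) := by
            apply mul_le_mul_of_nonneg_right _ (by positivity)
            exact_mod_cast le_trans (Nat.cast_le.mpr (Finset.card_le_card hTsub))
              (Nat.cast_le.mpr hScard)
        _ = 2 * s * B := by ring
  calc l1 (xnew - x) = _ := hsplit
    _ ≤ s * B + 2 * s * B := add_le_add h1 h2
    _ = 3 * s * B := by ring

/-- Corollary 2.2: geometric convergence of nonlinear IHT with bounded error terms. -/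
theorem nonlinear_IHT_coherence_geometric {M N : ℕ} (s : ℕ)
    (Φ : (Fin N → ℂ) → (Fin M → ℂ))
    (x : Fin N → ℂ) (hx : sparse s x)
    (ε y : Fin M → ℂ) (hy : y = Φ x + ε)
    (Φlin : ℕ → Matrix (Fin M) (Fin N) ℂ)
    (hcol : ∀ n j, colNorm (Φlin n) j = 1)
    (μ0 : ℝ) (hμ : ∀ n, coherence (Φlin n) ≤ μ0)
    (xseq : ℕ → Fin N → ℂ)
    (hit : ∀ n, IsHardThreshold s
      (xseq n + (Φlin n)ᴴ.mulVec (y - (Φlin n).mulVec (xseq n))) (xseq (n + 1)))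
    (ρ : ℝ) (hρ : ρ = μ0 * (3 * (s : ℝ) + 1)) (hρ1 : ρ < 1)
    (M' : ℝ)
    (hM' : ∀ n, linf ((Φlin n)ᴴ.mulVec (Φ x - (Φlin n).mulVec x + ε)) ≤ M') :
    ∀ n : ℕ, 1 ≤ n →
      l1 (xseq n - x) ≤ ρ ^ n * l1 (xseq 0 - x) + M' * (3 * (s : ℝ) + 1) / (1 - ρ) := by
  have hμ0 : 0 ≤ μ0 := le_trans (my_coherence_nonneg (Φlin 0)) (hμ 0)
  have hM0 : 0 ≤ M' := by
    refine le_trans ?_ (hM' 0)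
    rw [linf]
    exact Real.iSup_nonneg fun i => norm_nonneg _
  have hρ0 : 0 ≤ ρ := by rw [hρ]; positivity
  set C : ℝ := M' * (3 * (s : ℝ) + 1) with hC
  have hC0 : 0 ≤ C := by rw [hC]; positivity
  -- one-step bound
  have hstep : ∀ n, l1 (xseq (n + 1) - x) ≤ ρ * l1 (xseq n - x) + C := by
    intro n
    set A := Φlin n with hA
    set h : Fin N → ℂ := xseq n - x with hh
    set e : Fin M → ℂ := Φ x - A.mulVec x + ε with he
    have hL0 : 0 ≤ l1 h := Finset.sum_nonneg fun i _ => norm_nonneg _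
    set B : ℝ := μ0 * l1 h + M' with hBdef
    have hB0 : 0 ≤ B := by positivity
    set z : Fin N → ℂ := xseq n + Aᴴ.mulVec (y - A.mulVec (xseq n)) with hz
    have hzx : ∀ i, ‖z i - x i‖ ≤ B := by
      intro i
      have hy' : y - A.mulVec (xseq n) = A.mulVec (x - xseq n) + e := by
        rw [hy, he, Matrix.mulVec_sub]; abel
      have hzsub : z - x = (h - (Aᴴ * A).mulVec h) + Aᴴ.mulVec e := by
        have hxm : x - xseq n = -h := by rw [hh]; abel
        rw [hz, hy', Matrix.mulVec_add, hxm, Matrix.mulVec_neg, Matrix.mulVec_neg,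
          ← Matrix.mulVec_mulVec, hh]
        abel
      have hcomp : z i - x i = h i - ∑ j, (Aᴴ * A) i j * h j + (Aᴴ.mulVec e) i := by
        have := congrFun hzsub i
        simpa [Matrix.mulVec, dotProduct] using this
      have hsum : ∑ j, (Aᴴ * A) i j * h j
          = h i + ∑ j ∈ Finset.univ.erase i, (Aᴴ * A) i j * h j := by
        rw [← Finset.add_sum_erase Finset.univ _ (Finset.mem_univ i),
          my_gram_diag A (hcol n) i, one_mul]
      have hcomp2 : z i - x i
          = -(∑ j ∈ Finset.univ.erase i, (Aᴴ * A) i j * h j) + (Aᴴ.mulVec e) i := by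
        rw [hcomp, hsum]; ring
      calc ‖z i - x i‖
          ≤ ‖∑ j ∈ Finset.univ.erase i, (Aᴴ * A) i j * h j‖ + ‖(Aᴴ.mulVec e) i‖ := by
            rw [hcomp2]
            exact (norm_add_le _ _).trans (by rw [norm_neg])
        _ ≤ (∑ j ∈ Finset.univ.erase i, μ0 * ‖h j‖) + M' := by
            apply add_le_add
            · refine (norm_sum_le _ _).trans (Finset.sum_le_sum fun j hj => ?_)
              rw [norm_mul]
              have hij : i ≠ j := fun hij => (Finset.mem_erase.mp hj).1 hij.symm
              exact mul_le_mul_of_nonneg_right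
                (my_coherence_entry_le A (hcol n) (hμ n) hij) (norm_nonneg _)
            · exact (my_linf_ge _ i).trans (hM' n)
        _ ≤ μ0 * l1 h + M' := by
            refine add_le_add ?_ le_rfl
            rw [← Finset.mul_sum]
            apply mul_le_mul_of_nonneg_left _ hμ0
            apply Finset.sum_le_sum_of_subset_of_nonneg (Finset.subset_univ _)
            intro j _ _; exact norm_nonneg _
    have hthresh := my_threshold_l1_le hx (hit n) hzx hB0
    have hcast : l1 (xseq (n + 1) - x) ≤ 3 * (s : ℝ) * B := hthresh
    rw [hBdef] at hcast
    have hmul : 0 ≤ μ0 * l1 h := by positivity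
    nlinarith [hcast, hmul, hM0, hρ0]
  -- induction
  have hind : ∀ n, l1 (xseq n - x)
      ≤ ρ ^ n * l1 (xseq 0 - x) + C * ∑ k ∈ Finset.range n, ρ ^ k := by
    intro n
    induction n with
    | zero => simp
    | succ n ih =>
      have h1 : ρ * l1 (xseq n - x) ≤ ρ * (ρ ^ n * l1 (xseq 0 - x)
          + C * ∑ k ∈ Finset.range n, ρ ^ k) := mul_le_mul_of_nonneg_left ih hρ0
      calc l1 (xseq (n + 1) - x) ≤ ρ * l1 (xseq n - x) + C := hstep n
        _ ≤ ρ * (ρ ^ n * l1 (xseq 0 - x) + C * ∑ k ∈ Finset.range n, ρ ^ k) + C := by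
            linarith
        _ = ρ ^ (n + 1) * l1 (xseq 0 - x)
            + C * (ρ * ∑ k ∈ Finset.range n, ρ ^ k + 1) := by ring
        _ = ρ ^ (n + 1) * l1 (xseq 0 - x) + C * ∑ k ∈ Finset.range (n + 1), ρ ^ k := by
            rw [geom_sum_succ]
  intro n _
  have hgeom := my_geom_le ρ hρ0 hρ1 n
  have : C * ∑ k ∈ Finset.range n, ρ ^ k ≤ C * (1 / (1 - ρ)) :=
    mul_le_mul_of_nonneg_left hgeom hC0
  have hfin : C * (1 / (1 - ρ)) = M' * (3 * (s : ℝ) + 1) / (1 - ρ) := by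
    rw [hC]; ring
  linarith [hind n]


end
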